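/- arXiv:2507.14621 — 2 statements merged into one kernel-verified Lean document; each statement's English description precedes it below -/
import Mathlib

section
/- Let n, P ≥ 1, let z be an n×P real matrix, ν ∈ ℝⁿ nonzero, S a symmetric positive definite P×P matrix with symmetric positive definite square root S^{1/2} and inverse square root S^{-1/2}, T > 0 real, and assume zᵀν ≠ 0. Define Π = I_n − ν νᵀ/‖ν‖², J = (S^{-1/2} zᵀν)/‖S^{-1/2} zᵀν‖, D = ‖√T · S^{-1/2} zᵀν‖, and for φ ∈ ℝ define the perturbed data z(φ) = Π z + φ · (ν/(√T ‖ν‖²)) Jᵀ S^{1/2}. Then z(D) = z: evaluating the perturbation at the realized value of the square-root Wald statistic recovers the original data. -/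
open Matrix Finset

/-- Euclidean norm of a finitely indexed real vector. -/
noncomputable def eucNorm {ι : Type*} [Fintype ι] (v : ι → ℝ) : ℝ :=
  Real.sqrt (∑ p, v p ^ 2)

lemma eucNorm_pos {ι : Type*} [Fintype ι] {v : ι → ℝ} (hv : v ≠ 0) : 0 < eucNorm v := by
  apply Real.sqrt_pos.mpr
  obtain ⟨i, hi⟩ := Function.ne_iff.mp hv
  exact Finset.sum_pos' (fun j _ => sq_nonneg _) ⟨i, Finset.mem_univ i, lt_of_le_of_ne (sq_nonneg _) (Ne.symm (pow_ne_zero _ hi))⟩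

lemma eucNorm_smul {ι : Type*} [Fintype ι] (c : ℝ) (v : ι → ℝ) :
    eucNorm (c • v) = |c| * eucNorm v := by
  simp only [eucNorm, Pi.smul_apply, smul_eq_mul, mul_pow, ← Finset.mul_sum]
  rw [Real.sqrt_mul (sq_nonneg c), Real.sqrt_sq_eq_abs]

lemma vecMulVec_smul_smul {ι κ : Type*} (a b : ℝ) (x : ι → ℝ) (y : κ → ℝ) :
    vecMulVec (a • x) (b • y) = (a * b) • vecMulVec x y := by
  ext i j
  simp [vecMulVec_apply]
  ring

/-- Evaluating the perturbed data `z(φ) = Π z + φ (ν/(√T ‖ν‖²)) Jᵀ S^{1/2}` of the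
selective inference procedure at the realized square-root Wald statistic
`φ = D = ‖√T S^{-1/2} zᵀν‖` recovers the original data: `z(D) = z`. -/
theorem stmt5 {n P : ℕ} (hn : 1 ≤ n) (hP : 1 ≤ P)
    (z : Matrix (Fin n) (Fin P) ℝ) (ν : Fin n → ℝ) (hν : ν ≠ 0)
    (S Shalf Sinvhalf : Matrix (Fin P) (Fin P) ℝ)
    (hS : S.PosDef) (hShalf : Shalf.PosDef) (hSinvhalf : Sinvhalf.PosDef)
    (hsq : Shalf * Shalf = S) (hinv : Sinvhalf * Shalf = 1)
    (T : ℝ) (hT : 0 < T)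
    (hzν : zᵀ *ᵥ ν ≠ 0)
    (Pmat : Matrix (Fin n) (Fin n) ℝ)
    (hPmat : Pmat = 1 - (eucNorm ν ^ 2)⁻¹ • vecMulVec ν ν)
    (J : Fin P → ℝ)
    (hJ : J = (eucNorm (Sinvhalf *ᵥ (zᵀ *ᵥ ν)))⁻¹ • (Sinvhalf *ᵥ (zᵀ *ᵥ ν)))
    (D : ℝ) (hD : D = eucNorm (Real.sqrt T • (Sinvhalf *ᵥ (zᵀ *ᵥ ν))))
    (zφ : ℝ → Matrix (Fin n) (Fin P) ℝ)
    (hzφ : ∀ φ : ℝ,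
      zφ φ = Pmat * z + φ • vecMulVec ((Real.sqrt T * eucNorm ν ^ 2)⁻¹ • ν) (J ᵥ* Shalf)) :
    zφ D = z := by
  set u := zᵀ *ᵥ ν with hu
  set w := Sinvhalf *ᵥ u with hw
  have hShalfw : Shalf *ᵥ w = u := by
    rw [hw, mulVec_mulVec, mul_eq_one_comm.mp hinv, one_mulVec]
  have hwne : w ≠ 0 := by
    intro h
    apply hzν
    rw [← hShalfw, h, mulVec_zero]
  have hwpos : 0 < eucNorm w := eucNorm_pos hwne
  have hνpos : 0 < eucNorm ν := eucNorm_pos hν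
  have hTpos : 0 < Real.sqrt T := Real.sqrt_pos.mpr hT
  have hDval : D = Real.sqrt T * eucNorm w := by
    rw [hD, eucNorm_smul, abs_of_nonneg (Real.sqrt_nonneg T)]
  have hsym : Shalfᵀ = Shalf := hShalf.isHermitian
  have hJS : J ᵥ* Shalf = (eucNorm w)⁻¹ • u := by
    rw [hJ, ← hsym, vecMul_transpose, mulVec_smul, hShalfw]
  -- the perturbation term equals the projection correction
  have hterm : D • vecMulVec ((Real.sqrt T * eucNorm ν ^ 2)⁻¹ • ν) (J ᵥ* Shalf)
      = (eucNorm ν ^ 2)⁻¹ • vecMulVec ν u := by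
    rw [hJS, vecMulVec_smul_smul, smul_smul, hDval]
    congr 1
    field_simp
  have hproj : vecMulVec ν ν * z = vecMulVec ν u := by
    ext i p
    simp only [mul_apply, vecMulVec_apply, hu, mulVec, dotProduct, transpose_apply]
    rw [Finset.mul_sum]
    exact Finset.sum_congr rfl fun k _ => by ring
  rw [hzφ, hterm, hPmat, Matrix.sub_mul, Matrix.one_mul, Matrix.smul_mul, hproj,
    sub_add_cancel]
end

section
/- Let n, P ≥ 1, z an n×P real matrix, ν ∈ ℝⁿ nonzero, S a symmetric positive definite P×P matrix with symmetric positive definite square root S^{1/2} and inverse square root S^{-1/2}, T > 0 real, and zᵀν ≠ 0. Let Π = I_n − ννᵀ/‖ν‖², J = (S^{-1/2} zᵀν)/‖S^{-1/2} zᵀν‖, j = (zᵀν)/‖zᵀν‖, and for φ ∈ ℝ set z(φ) = Π z + φ (ν/(√T‖ν‖²)) Jᵀ S^{1/2}. Then z(φ) = z − (‖zᵀν‖/‖ν‖²) ν jᵀ + φ · (‖zᵀν‖/(√T · ‖S^{-1/2} zᵀν‖ · ‖ν‖²)) ν jᵀ. In particular z(φ) depends on φ only through a multiple of the rank-one matrix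 ν jᵀ. -/
open Matrix Finset

/-- Euclidean norm of a finitely indexed real vector. -/
noncomputable def euclidNorm {ι : Type*} [Fintype ι] (v : ι → ℝ) : ℝ :=
  Real.sqrt (∑ p, v p ^ 2)

lemma euclidNorm_pos {ι : Type*} [Fintype ι] {v : ι → ℝ} (hv : v ≠ 0) : 0 < euclidNorm v := by
  obtain ⟨i, hi⟩ := Function.ne_iff.mp hv
  have hi' : v i ≠ 0 := by simpa using hi
  have h1 : 0 < v i ^ 2 := pow_two_pos_of_ne_zero hi'
  have h2 : v i ^ 2 ≤ ∑ p, v p ^ 2 :=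
    Finset.single_le_sum (fun p _ => sq_nonneg (v p)) (Finset.mem_univ i)
  exact Real.sqrt_pos.mpr (lt_of_lt_of_le h1 h2)

/-- Identity (perturbed2): the perturbed data of the selective inference procedure
can be rewritten as
`z(φ) = z − (‖zᵀν‖/‖ν‖²) ν jᵀ + φ (‖zᵀν‖/(√T ‖S^{-1/2} zᵀν‖ ‖ν‖²)) ν jᵀ`,
where `j` is the unit direction of `zᵀν`; in particular `z(φ)` depends on `φ`
only through a multiple of the rank-one matrix `ν jᵀ`. -/
theorem stmt6 {n P : ℕ} (hn : 1 ≤ n) (hP : 1 ≤ P)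
    (z : Matrix (Fin n) (Fin P) ℝ) (ν : Fin n → ℝ) (hν : ν ≠ 0)
    (S Shalf Sinvhalf : Matrix (Fin P) (Fin P) ℝ)
    (hS : S.PosDef) (hShalf : Shalf.PosDef) (hSinvhalf : Sinvhalf.PosDef)
    (hsq : Shalf * Shalf = S) (hinv : Sinvhalf * Shalf = 1)
    (T : ℝ) (hT : 0 < T)
    (hzν : zᵀ *ᵥ ν ≠ 0)
    (Pmat : Matrix (Fin n) (Fin n) ℝ)
    (hPmat : Pmat = 1 - (euclidNorm ν ^ 2)⁻¹ • vecMulVec ν ν)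
    (J : Fin P → ℝ)
    (hJ : J = (euclidNorm (Sinvhalf *ᵥ (zᵀ *ᵥ ν)))⁻¹ • (Sinvhalf *ᵥ (zᵀ *ᵥ ν)))
    (j : Fin P → ℝ)
    (hj : j = (euclidNorm (zᵀ *ᵥ ν))⁻¹ • (zᵀ *ᵥ ν))
    (zφ : ℝ → Matrix (Fin n) (Fin P) ℝ)
    (hzφ : ∀ φ : ℝ,
      zφ φ = Pmat * z + φ • vecMulVec ((Real.sqrt T * euclidNorm ν ^ 2)⁻¹ • ν) (J ᵥ* Shalf)) :
    ∀ φ : ℝ,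
      zφ φ = z - (euclidNorm (zᵀ *ᵥ ν) / euclidNorm ν ^ 2) • vecMulVec ν j
        + (φ * (euclidNorm (zᵀ *ᵥ ν) /
            (Real.sqrt T * euclidNorm (Sinvhalf *ᵥ (zᵀ *ᵥ ν)) * euclidNorm ν ^ 2))) • vecMulVec ν j := by
  intro φ
  set w := zᵀ *ᵥ ν with hw
  have hShalfsym : Shalfᵀ = Shalf := by
    have := hShalf.isHermitian
    simpa [Matrix.IsHermitian] using this
  -- Shalf * Sinvhalf = 1
  have hinv' : Shalf * Sinvhalf = 1 := mul_eq_one_comm.mp hinv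
  -- key vector identity
  have hJS : J ᵥ* Shalf = (euclidNorm (Sinvhalf *ᵥ w))⁻¹ • w := by
    rw [hJ]
    rw [Matrix.smul_vecMul]
    congr 1
    calc (Sinvhalf *ᵥ w) ᵥ* Shalf = (w ᵥ* Sinvhalfᵀ) ᵥ* Shalf := by
          rw [Matrix.vecMul_transpose]
      _ = w ᵥ* (Sinvhalfᵀ * Shalf) := by rw [Matrix.vecMul_vecMul]
      _ = w := by
          have : Sinvhalfᵀ = Sinvhalf := by
            have := hSinvhalf.isHermitian
            simpa [Matrix.IsHermitian] using this
          rw [this, hinv, Matrix.vecMul_one]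
  -- nonzero scalars
  have ha : euclidNorm w ≠ 0 := ne_of_gt (euclidNorm_pos hzν)
  have hwS : Sinvhalf *ᵥ w ≠ 0 := by
    intro h
    apply hzν
    have : Shalf *ᵥ (Sinvhalf *ᵥ w) = Shalf *ᵥ (0 : Fin P → ℝ) := by rw [h]
    rw [Matrix.mulVec_mulVec, hinv', Matrix.one_mulVec, Matrix.mulVec_zero] at this
    exact this
  have hb : euclidNorm (Sinvhalf *ᵥ w) ≠ 0 := ne_of_gt (euclidNorm_pos hwS)
  have hc : euclidNorm ν ≠ 0 := ne_of_gt (euclidNorm_pos hν)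
  have hTs : Real.sqrt T ≠ 0 := ne_of_gt (Real.sqrt_pos.mpr hT)
  rw [hzφ, hJS, hj, hPmat]
  ext i p
  simp only [Matrix.sub_mul, Matrix.one_mul, Matrix.sub_apply, Matrix.add_apply,
    Matrix.smul_apply, Matrix.mul_apply, Matrix.vecMulVec_apply, Pi.smul_apply,
    smul_eq_mul]
  have hsum : ∑ k, (euclidNorm ν ^ 2)⁻¹ * (ν i * ν k) * z k p
      = (euclidNorm ν ^ 2)⁻¹ * (ν i * w p) := by
    rw [hw]
    simp only [Matrix.mulVec, dotProduct, Matrix.transpose_apply]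
    rw [Finset.mul_sum, Finset.mul_sum]
    exact Finset.sum_congr rfl (fun k _ => by ring)
  rw [hsum]
  field_simp
end
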